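/- Let (Ω, ℱ, ℙ) be a probability space, let n ≥ 2 be an integer, and let A be a real number with 0 < A ≤ n². Let ε > 0 and d > 0 be real numbers, and let k be a natural number with (k : ℝ) ≥ ε·(n²(n−1)/A)^{2/3}. Let Y_1, …, Y_k be independent identically distributed square-integrable real-valued random variables on Ω, each with mean E[Y_i] = A/(n(n−1)) and variance Var[Y_i] = (n(n−1)−1)·A²/(n²(n−1)²·(n(n−1)+1)). Then ℙ[ |(n(n−1)/k)·Σ_{i=1}^k Y_i − A| ≥ d·A ] ≤ (1/(ε d²))·(A/(n²(n−1)))^{2/3}. -/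

import Mathlib

set_option maxHeartbeats 1000000

open MeasureTheory ProbabilityTheory

theorem estimation_failure_probability_pairs
    {Ω : Type*} [MeasureSpace Ω] [IsProbabilityMeasure (ℙ : Measure Ω)]
    (n : ℕ) (hn : 2 ≤ n) (A : ℝ) (hA0 : 0 < A) (hA : A ≤ (n : ℝ) ^ 2)
    (ε d : ℝ) (hε : 0 < ε) (hd : 0 < d)
    (k : ℕ) (hk : ε * ((n : ℝ) ^ 2 * ((n : ℝ) - 1) / A) ^ ((2 : ℝ) / 3) ≤ (k : ℝ))
    (Y : Fin k → Ω → ℝ)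
    (hmeas : ∀ i, Measurable (Y i))
    (hL2 : ∀ i, MemLp (Y i) 2 ℙ)
    (hindep : iIndepFun Y ℙ)
    (hid : ∀ i j, IdentDistrib (Y i) (Y j) ℙ ℙ)
    (hmean : ∀ i, (∫ ω, Y i ω ∂ℙ) = A / ((n : ℝ) * ((n : ℝ) - 1)))
    (hvar : ∀ i, variance (Y i) ℙ =
      ((n : ℝ) * ((n : ℝ) - 1) - 1) * A ^ 2 /
        ((n : ℝ) ^ 2 * ((n : ℝ) - 1) ^ 2 * ((n : ℝ) * ((n : ℝ) - 1) + 1))) :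
    ℙ {ω | d * A ≤ |((n : ℝ) * ((n : ℝ) - 1) / k) * ∑ i, Y i ω - A|} ≤
      ENNReal.ofReal (1 / (ε * d ^ 2) *
        (A / ((n : ℝ) ^ 2 * ((n : ℝ) - 1))) ^ ((2 : ℝ) / 3)) := by
  have hn1 : (1 : ℝ) < (n : ℝ) := by exact_mod_cast Nat.lt_of_lt_of_le one_lt_two hn
  have hn0 : (0 : ℝ) < (n : ℝ) := lt_trans one_pos hn1
  set c : ℝ := (n : ℝ) * ((n : ℝ) - 1) with hc_def
  have hc : 0 < c := mul_pos hn0 (by linarith)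
  have hB : 0 < (n : ℝ) ^ 2 * ((n : ℝ) - 1) := mul_pos (by positivity) (by linarith)
  have hBpos : 0 < A / ((n : ℝ) ^ 2 * ((n : ℝ) - 1)) := div_pos hA0 hB
  have hrpos : 0 < (A / ((n : ℝ) ^ 2 * ((n : ℝ) - 1))) ^ ((2 : ℝ) / 3) :=
    Real.rpow_pos_of_pos hBpos _
  have hkpos : 0 < (k : ℝ) := by
    refine lt_of_lt_of_le ?_ hk
    have : 0 < ((n : ℝ) ^ 2 * ((n : ℝ) - 1) / A) ^ ((2 : ℝ) / 3) :=
      Real.rpow_pos_of_pos (div_pos hB hA0) _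
    positivity
  have hk' : ε ≤ (k : ℝ) * (A / ((n : ℝ) ^ 2 * ((n : ℝ) - 1))) ^ ((2 : ℝ) / 3) := by
    have hinv : ((n : ℝ) ^ 2 * ((n : ℝ) - 1) / A) ^ ((2 : ℝ) / 3)
        = ((A / ((n : ℝ) ^ 2 * ((n : ℝ) - 1))) ^ ((2 : ℝ) / 3))⁻¹ := by
      rw [← Real.inv_rpow hBpos.le, inv_div]
    rw [hinv] at hk
    calc ε = ε * ((A / ((n : ℝ) ^ 2 * ((n : ℝ) - 1))) ^ ((2 : ℝ) / 3))⁻¹ *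
        (A / ((n : ℝ) ^ 2 * ((n : ℝ) - 1))) ^ ((2 : ℝ) / 3) := by
          field_simp
      _ ≤ _ := mul_le_mul_of_nonneg_right hk hrpos.le
  set S : Ω → ℝ := ∑ i, Y i with hS_def
  have hSL2 : MemLp S 2 ℙ := memLp_finset_sum' _ (fun i _ => hL2 i)
  have hES : (∫ ω, S ω ∂ℙ) = (k : ℝ) * (A / c) := by
    have : (∫ ω, S ω ∂ℙ) = ∑ i : Fin k, ∫ ω, Y i ω ∂ℙ := by
      simp only [hS_def, Finset.sum_apply]
      exact integral_finset_sum _ (fun i _ => (hL2 i).integrable one_le_two)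
    rw [this]
    simp [hmean, div_eq_mul_inv, mul_comm]
  have hVarS : variance S ℙ = (k : ℝ) * ((c - 1) * A ^ 2 /
      ((n : ℝ) ^ 2 * ((n : ℝ) - 1) ^ 2 * (c + 1))) := by
    rw [hS_def, IndepFun.variance_sum (fun i _ => hL2 i)
      (fun i _ j _ hij => hindep.indepFun hij)]
    simp [hvar]
  have hkc : 0 < c / (k : ℝ) := div_pos hc hkpos
  have hset : {ω | d * A ≤ |c / (k:ℝ) * ∑ i, Y i ω - A|}
      = {ω | d * A * (k:ℝ) / c ≤ |S ω - (∫ ω, S ω ∂ℙ)|} := by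
    ext ω
    simp only [Set.mem_setOf_eq, hES]
    have hSω : c / (k:ℝ) * ∑ i, Y i ω - A = c / (k:ℝ) * (S ω - (k:ℝ) * (A / c)) := by
      simp only [hS_def, Finset.sum_apply]
      field_simp
    rw [hSω, abs_mul, abs_of_pos hkc]
    rw [div_mul_eq_mul_div, le_div_iff₀ hkpos, div_le_iff₀ hc,
      mul_comm |S ω - (k:ℝ) * (A / c)| c]
  have ht : 0 < d * A * (k:ℝ) / c := by positivity
  have hcheb := meas_ge_le_variance_div_sq (μ := ℙ) hSL2 ht
  rw [hset]
  refine le_trans hcheb (ENNReal.ofReal_le_ofReal ?_)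
  rw [hVarS]
  have hc2 : (n : ℝ) ^ 2 * ((n : ℝ) - 1) ^ 2 = c ^ 2 := by rw [hc_def]; ring
  have hstep1 : (k : ℝ) * ((c - 1) * A ^ 2 /
      ((n : ℝ) ^ 2 * ((n : ℝ) - 1) ^ 2 * (c + 1))) / (d * A * (k:ℝ) / c) ^ 2
      = (c - 1) / ((c + 1) * d ^ 2 * (k:ℝ)) := by
    rw [hc2]
    have h1 : c ≠ 0 := hc.ne'
    have h2 : (k:ℝ) ≠ 0 := hkpos.ne'
    have h3 : d ≠ 0 := hd.ne'
    have h4 : A ≠ 0 := hA0.ne'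
    have h5 : c + 1 ≠ 0 := by positivity
    field_simp
  rw [hstep1]
  have h1 : (c - 1) / ((c + 1) * d ^ 2 * (k:ℝ)) ≤ 1 / (d ^ 2 * (k:ℝ)) := by
    rw [div_le_div_iff₀ (by positivity) (by positivity)]
    nlinarith [hc, hkpos, sq_nonneg d]
  refine le_trans h1 ?_
  have hrhs : 1 / (ε * d ^ 2) * (A / ((n : ℝ) ^ 2 * ((n : ℝ) - 1))) ^ ((2 : ℝ) / 3)
      = (A / ((n : ℝ) ^ 2 * ((n : ℝ) - 1))) ^ ((2 : ℝ) / 3) / (ε * d ^ 2) := by ring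
  rw [hrhs, div_le_div_iff₀ (by positivity) (by positivity)]
  nlinarith [mul_le_mul_of_nonneg_right hk' (sq_nonneg d)]
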